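/- Two pure ordered FFKPs F' = F_{a^{k_{s_1}}} ⊗ ⋯ ⊗ F_{a^{k_1}} and F'' = F_{a^{l_{s_2}}} ⊗ ⋯ ⊗ F_{a^{l_1}} (a prime, exponents nonincreasing) are permutation equivalent (F' = P_r F'' P_c for some permutation matrices) if and only if they are identical, i.e. s_1 = s_2 and k_j = l_j for all j. -/

import Mathlib

open Matrix

/-- The unitary Fourier matrix of size `n` (0-based indexing):
`[F_n]_{i,j} = (1/√n)·exp(2πi·i·j/n)`. -/
noncomputable def Fourier (n : ℕ) : Matrix (Fin n) (Fin n) ℂ :=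
  Matrix.of fun i j =>
    ((1 / Real.sqrt n : ℝ) : ℂ) *
      Complex.exp (2 * Real.pi * Complex.I * ((i : ℕ) : ℂ) * ((j : ℕ) : ℂ) / n)

/-- Kronecker product of square complex matrices, realized on `Fin (m * n)`. -/
noncomputable def kron {m n : ℕ} (A : Matrix (Fin m) (Fin m) ℂ)
    (B : Matrix (Fin n) (Fin n) ℂ) : Matrix (Fin (m * n)) (Fin (m * n)) ℂ :=
  Matrix.of fun i j =>
    A (finProdFinEquiv.symm i).1 (finProdFinEquiv.symm j).1 *
      B (finProdFinEquiv.symm i).2 (finProdFinEquiv.symm j).2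

/-- Kronecker product of row vectors. -/
noncomputable def kronVec {m n : ℕ} (v : Fin m → ℂ) (w : Fin n → ℂ) : Fin (m * n) → ℂ :=
  fun i => v (finProdFinEquiv.symm i).1 * w (finProdFinEquiv.symm i).2

/-- Kronecker product of the Fourier matrices of the sizes in the list `L`. -/
noncomputable def kronFourier : (L : List ℕ) → Matrix (Fin L.prod) (Fin L.prod) ℂ
  | [] => 1
  | n :: t => kron (Fourier n) (kronFourier t)

open Classical in
/-- `v` is a row of length `N` whose entries are `(1/√N)` times the `n`-th roots of
unity, each occurring `N / n` times. -/
def RowVals (N n : ℕ) (v : Fin N → ℂ) : Prop :=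
  ∀ t : Fin n,
    (Finset.univ.filter fun j =>
      v j = ((1 / Real.sqrt N : ℝ) : ℂ) *
        Complex.exp (2 * Real.pi * Complex.I * ((t : ℕ) : ℂ) / n)).card = N / n

open Classical in
/-- Number of rows of the square matrix `M` that are of "type `n`", i.e. consist of
`(1/√N)` times the `n`-th roots of unity, each occurring equally often. -/
noncomputable def countRows (N n : ℕ) (M : Matrix (Fin N) (Fin N) ℂ) : ℕ :=
  (Finset.univ.filter fun i : Fin N => RowVals N n (M i)).card

/-- `P` is a permutation matrix. -/
def IsPermMatrix {α : Type*} [DecidableEq α] (P : Matrix α α ℂ) : Prop :=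
  ∃ σ : Equiv.Perm α, ∀ i j, P i j = if σ j = i then (1 : ℂ) else 0

/-- `D` is a unitary diagonal matrix. -/
def IsUnitaryDiag {α : Type*} [DecidableEq α] (D : Matrix α α ℂ) : Prop :=
  ∃ d : α → ℂ, (∀ i, ‖d i‖ = 1) ∧ D = Matrix.diagonal d

open Matrix Finset

noncomputable def ee (x : ℚ) : ℂ := Complex.exp (2 * Real.pi * Complex.I * (x : ℂ))

lemma two_pi_I_ne : (2 * (Real.pi : ℂ) * Complex.I) ≠ 0 :=
  mul_ne_zero (mul_ne_zero two_ne_zero (by exact_mod_cast Real.pi_ne_zero)) Complex.I_ne_zero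

lemma ee_eq_ee_iff {x y : ℚ} : ee x = ee y ↔ ∃ n : ℤ, x - y = n := by
  rw [ee, ee, Complex.exp_eq_exp_iff_exists_int]
  constructor
  · rintro ⟨n, h⟩
    have h2 : (2 * (Real.pi : ℂ) * Complex.I) * (x : ℂ) =
        (2 * (Real.pi : ℂ) * Complex.I) * ((y : ℂ) + n) := by rw [h]; ring
    have h3 := mul_left_cancel₀ two_pi_I_ne h2
    refine ⟨n, ?_⟩
    have : ((x - y : ℚ) : ℂ) = ((n : ℚ) : ℂ) := by push_cast; rw [h3]; ring
    exact_mod_cast this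
  · rintro ⟨n, h⟩
    refine ⟨n, ?_⟩
    have : (x : ℂ) - y = n := by exact_mod_cast h
    linear_combination (2 * (Real.pi : ℂ) * Complex.I) * this

lemma ee_add (x y : ℚ) : ee (x + y) = ee x * ee y := by
  rw [ee, ee, ee, ← Complex.exp_add]
  congr 1
  push_cast
  ring

noncomputable def cval (N d t : ℕ) : ℂ :=
  ((1 / Real.sqrt N : ℝ) : ℂ) * ee ((t : ℚ) / d)

lemma sqrt_term_ne {N : ℕ} (hN : 0 < N) : ((1 / Real.sqrt N : ℝ) : ℂ) ≠ 0 := by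
  have : (0:ℝ) < Real.sqrt N := Real.sqrt_pos.mpr (by exact_mod_cast hN)
  simp only [ne_eq, Complex.ofReal_eq_zero]
  positivity

lemma cval_ne_zero {N d t : ℕ} (hN : 0 < N) : cval N d t ≠ 0 :=
  mul_ne_zero (sqrt_term_ne hN) (Complex.exp_ne_zero _)

lemma cval_inj {N d : ℕ} (hN : 0 < N) {t s : ℕ} (ht : t < d) (hs : s < d)
    (h : cval N d t = cval N d s) : t = s := by
  have h2 : ee ((t:ℚ)/d) = ee ((s:ℚ)/d) := mul_left_cancel₀ (sqrt_term_ne hN) h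
  obtain ⟨n, hn⟩ := ee_eq_ee_iff.mp h2
  have hd0 : 0 < d := lt_of_le_of_lt (Nat.zero_le t) ht
  have hdq : (d:ℚ) ≠ 0 := by exact_mod_cast hd0.ne'
  have hz : (t:ℚ) - s = n * d := by
    field_simp at hn
    linarith [hn]
  have hz' : (t:ℤ) - s = n * d := by exact_mod_cast hz
  have htd : (t:ℤ) < d := by exact_mod_cast ht
  have hsd : (s:ℤ) < d := by exact_mod_cast hs
  have ht0 : (0:ℤ) ≤ t := Int.natCast_nonneg t
  have hs0 : (0:ℤ) ≤ s := Int.natCast_nonneg s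
  have hdz : (0:ℤ) < d := by exact_mod_cast hd0
  have hn0 : n = 0 := by
    by_contra hne
    rcases lt_or_gt_of_ne hne with h' | h'
    · have : n ≤ -1 := by omega
      nlinarith
    · have : 1 ≤ n := by omega
      nlinarith
  rw [hn0] at hz'
  omega

lemma rowVals_val_eq {N d : ℕ} (hd : 0 < d) (t : ℕ) :
    ((1 / Real.sqrt N : ℝ) : ℂ) *
        Complex.exp (2 * Real.pi * Complex.I * (t : ℂ) / d) = cval N d t := by
  rw [cval]
  congr 1
  rw [ee]
  congr 1
  have : (d:ℂ) ≠ 0 := by exact_mod_cast hd.ne'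
  push_cast
  field_simp

lemma card_filter_equiv {α β : Type*} [Fintype α] [Fintype β] (e : α ≃ β) (p : β → Prop)
    [DecidablePred p] [DecidablePred fun a => p (e a)] :
    (Finset.univ.filter fun a => p (e a)).card = (Finset.univ.filter p).card := by
  refine Finset.card_bij' (fun a _ => e a) (fun b _ => e.symm b) ?_ ?_ ?_ ?_
  · intro a ha
    rw [Finset.mem_filter] at ha ⊢
    exact ⟨Finset.mem_univ _, ha.2⟩
  · intro b hb
    rw [Finset.mem_filter] at hb ⊢
    refine ⟨Finset.mem_univ _, ?_⟩
    simpa using hb.2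
  · intro a _; simp
  · intro b _; simp

open Classical in
lemma card_filter_prod {α β : Type*} [Fintype α] [Fintype β] (q : α → β → Prop) :
    (Finset.univ.filter fun x : α × β => q x.1 x.2).card
      = ∑ a : α, (Finset.univ.filter fun b => q a b).card := by
  rw [← Fintype.card_subtype]
  rw [Fintype.card_congr (Equiv.subtypeProdEquivSigmaSubtype q)]
  rw [Fintype.card_sigma]
  simp [Fintype.card_subtype]

open Classical in
lemma card_residue {n c r : ℕ} (hc : 0 < c) (hdvd : c ∣ n) (hr : r < c) :
    (Finset.univ.filter fun j : Fin n => (j : ℕ) % c = r).card = n / c := by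
  obtain ⟨q, rfl⟩ := hdvd
  have key : (Finset.univ.filter fun j : Fin (c * q) => (j : ℕ) % c = r).card
      = (Finset.univ : Finset (Fin q)).card := by
    refine Finset.card_bij' (fun j _ => (⟨(j : ℕ) / c, by
        have := j.isLt
        exact Nat.div_lt_of_lt_mul (by omega)⟩ : Fin q))
      (fun u _ => (⟨(u : ℕ) * c + r, by have := u.isLt; nlinarith⟩ : Fin (c * q))) ?_ ?_ ?_ ?_
    · intros; exact Finset.mem_univ _
    · intro u _
      rw [Finset.mem_filter]
      refine ⟨Finset.mem_univ _, ?_⟩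
      show ((u : ℕ) * c + r) % c = r
      rw [mul_comm, Nat.mul_add_mod, Nat.mod_eq_of_lt hr]
    · intro j hj
      rw [Finset.mem_filter] at hj
      obtain ⟨-, hj2⟩ := hj
      apply Fin.ext
      show (j : ℕ) / c * c + r = j
      conv_rhs => rw [← Nat.div_add_mod (j : ℕ) c]
      rw [hj2, mul_comm]
    · intro u _
      apply Fin.ext
      show ((u : ℕ) * c + r) / c = u
      rw [add_comm, Nat.add_mul_div_right _ _ hc, Nat.div_eq_of_lt hr, zero_add]
  rw [key, Finset.card_univ, Fintype.card_fin, Nat.mul_div_cancel_left q hc]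

open Classical in
lemma rowVals_iff {N d : ℕ} (hd : 0 < d) (v : Fin N → ℂ) :
    RowVals N d v ↔ ∀ t : Fin d,
      (Finset.univ.filter fun j => v j = cval N d (t : ℕ)).card = N / d := by
  unfold RowVals
  refine forall_congr' fun t => ?_
  rw [rowVals_val_eq hd]

open Classical in
lemma rowVals_complete {N d : ℕ} (hN : 0 < N) (hd : 0 < d) (hdvd : d ∣ N)
    {v : Fin N → ℂ} (hv : RowVals N d v) (j : Fin N) : ∃ t : Fin d, v j = cval N d t := by
  rw [rowVals_iff hd] at hv
  set F : Fin d → Finset (Fin N) := fun t => Finset.univ.filter fun j => v j = cval N d (t : ℕ)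
    with hF
  have hdisj : ∀ t ∈ (Finset.univ : Finset (Fin d)), ∀ s ∈ Finset.univ, t ≠ s →
      Disjoint (F t) (F s) := by
    intro t _ s _ hts
    refine Finset.disjoint_left.mpr fun x hxt hxs => ?_
    rw [hF, Finset.mem_filter] at hxt hxs
    exact hts (Fin.ext (cval_inj hN t.isLt s.isLt (hxt.2 ▸ hxs.2 ▸ rfl)))
  have hcard : (Finset.univ.biUnion F).card = N := by
    rw [Finset.card_biUnion hdisj]
    rw [Finset.sum_congr rfl fun t _ => (hv t : (F t).card = N / d)]
    rw [Finset.sum_const, Finset.card_univ, Fintype.card_fin, smul_eq_mul,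
      Nat.mul_div_cancel' hdvd]
  have huniv : Finset.univ.biUnion F = Finset.univ := by
    apply Finset.eq_univ_of_card
    simp [hcard]
  have : j ∈ Finset.univ.biUnion F := huniv ▸ Finset.mem_univ j
  obtain ⟨t, -, ht⟩ := Finset.mem_biUnion.mp this
  rw [hF, Finset.mem_filter] at ht
  exact ⟨t, ht.2⟩

open Classical in
lemma count_zero_of_not_val {N d : ℕ} (hN : 0 < N) (hd : 0 < d) (hdvd : d ∣ N)
    {v : Fin N → ℂ} (hv : RowVals N d v) {z : ℂ} (hz : ∀ t : Fin d, z ≠ cval N d t) :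
    (Finset.univ.filter fun j => v j = z).card = 0 := by
  rw [Finset.card_eq_zero]
  refine Finset.filter_eq_empty_iff.mpr fun j _ hj => ?_
  obtain ⟨t, ht⟩ := rowVals_complete hN hd hdvd hv j
  exact hz t (hj ▸ ht)

lemma rowVals_order_unique {N d e : ℕ} (hN : 0 < N) (hd : 0 < d) (hde : d ∣ e) (hne : d ≠ e)
    (heN : e ∣ N) {v : Fin N → ℂ} (hvd : RowVals N d v) (hve : RowVals N e v) : False := by
  have he : 0 < e := Nat.pos_of_dvd_of_pos heN hN
  have hdlt : d < e := lt_of_le_of_ne (Nat.le_of_dvd he hde) hne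
  have h1e : 1 < e := lt_of_le_of_lt hd hdlt
  have hcount := (rowVals_iff he v).mp hve ⟨1, h1e⟩
  have hpos : 0 < N / e := Nat.div_pos (Nat.le_of_dvd hN heN) he
  rw [← hcount] at hpos
  obtain ⟨j, hj⟩ := Finset.card_pos.mp hpos
  rw [Finset.mem_filter] at hj
  obtain ⟨t, ht⟩ := rowVals_complete hN hd (hde.trans heN) hvd j
  have hcv : cval N d (t : ℕ) = cval N e 1 := by rw [← ht, hj.2]
  have h2 : ee ((t:ℚ)/d) = ee ((1:ℕ)/e) := mul_left_cancel₀ (sqrt_term_ne hN) hcv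
  obtain ⟨n, hn⟩ := ee_eq_ee_iff.mp h2
  have hdq : (d:ℚ) ≠ 0 := by exact_mod_cast hd.ne'
  have heq : (e:ℚ) ≠ 0 := by exact_mod_cast he.ne'
  -- (t:ℚ)/d - 1/e = n  =>  t*e - d = n*d*e  =>  d = e*(t - n*d)
  have hz : (t:ℚ) * e - d = n * d * e := by
    field_simp at hn
    push_cast at hn ⊢
    nlinarith [hn]
  have hz' : (t:ℤ) * e - d = n * d * e := by exact_mod_cast hz
  have hdvd2 : (e:ℤ) ∣ d := ⟨(t:ℤ) - n * d, by linarith [hz']⟩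
  have : e ∣ d := Int.ofNat_dvd.mp (Int.dvd_natAbs.mpr hdvd2)
  exact absurd (Nat.le_of_dvd hd this) (not_le.mpr hdlt)

lemma exists_rat_res {d : ℕ} (hd : 0 < d) (q : ℚ) (hq : ∃ z : ℤ, q * d = z) :
    ∃ t : Fin d, ∃ n : ℤ, (t : ℚ) / d - q = n := by
  obtain ⟨z₀, hz₀⟩ := hq
  have hdz : (0:ℤ) < d := by exact_mod_cast hd
  have hdq : (d:ℚ) ≠ 0 := by exact_mod_cast hd.ne'
  refine ⟨⟨(z₀ % d).toNat, ?_⟩, -(z₀ / d), ?_⟩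
  · have h1 := Int.emod_nonneg z₀ hdz.ne'
    have h2 := Int.emod_lt_of_pos z₀ hdz
    omega
  · have h1 := Int.emod_nonneg z₀ hdz.ne'
    have hcast : (((z₀ % d).toNat : ℕ) : ℚ) = ((z₀ % d : ℤ) : ℚ) := by
      rw [← Int.cast_natCast]
      congr 1
      omega
    have hqd : q = (z₀ : ℚ) / d := eq_div_of_mul_eq hdq hz₀
    rw [hcast, hqd]
    have hmod : (z₀ % d : ℤ) = z₀ - d * (z₀ / d) := by
      rw [Int.emod_def]
    rw [hmod]
    push_cast
    field_simp
    ring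

lemma fourierM_apply {n : ℕ} (i j : Fin n) :
    Fourier n i j = ((1 / Real.sqrt n : ℝ) : ℂ) * ee (((i:ℕ) : ℚ) * ((j:ℕ) : ℚ) / n) := by
  rw [Fourier, Matrix.of_apply, ee]
  congr 2
  push_cast
  ring

open Classical in
lemma dvd_iff_exists_int {n' : ℕ} (hn' : 0 < n') (x y : ℕ) :
    (∃ z : ℤ, ((x : ℚ) - y) / n' = z) ↔ ((x : ℕ) : ZMod n') = ((y : ℕ) : ZMod n') := by
  have hq : (n' : ℚ) ≠ 0 := by exact_mod_cast hn'.ne'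
  rw [ZMod.natCast_eq_natCast_iff, Nat.modEq_iff_dvd]
  constructor
  · rintro ⟨z, hz⟩
    have h1 : (x : ℚ) - y = z * n' := by
      field_simp at hz
      linarith
    have h2 : (x : ℤ) - y = z * n' := by exact_mod_cast h1
    exact ⟨-z, by push_cast; linarith⟩
  · rintro ⟨c, hc⟩
    refine ⟨-c, ?_⟩
    have h1 : (y : ℚ) - x = n' * c := by exact_mod_cast hc
    field_simp
    push_cast
    linarith

open Classical in
lemma fourier_row {n : ℕ} (hn : 0 < n) (i : Fin n) :
    RowVals n (n / Nat.gcd n (i : ℕ)) (Fourier n i) := by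
  have hg0 : 0 < Nat.gcd n (i : ℕ) := Nat.gcd_pos_of_pos_left _ hn
  set g := Nat.gcd n (i : ℕ) with hg
  set n' := n / g with hn'def
  set i' := (i : ℕ) / g with hi'def
  have hng : n' * g = n := Nat.div_mul_cancel (Nat.gcd_dvd_left n i)
  have hig : i' * g = (i : ℕ) := Nat.div_mul_cancel (Nat.gcd_dvd_right n i)
  have hn'0 : 0 < n' := Nat.div_pos (Nat.le_of_dvd hn (Nat.gcd_dvd_left n i)) hg0
  haveI : NeZero n' := ⟨hn'0.ne'⟩
  have hcop : Nat.Coprime i' n' := by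
    rw [hi'def, hn'def, hg, Nat.gcd_comm n (i : ℕ)]
    exact Nat.coprime_div_gcd_div_gcd (by rw [Nat.gcd_comm (i : ℕ) n, ← hg]; exact hg0)
  set u := ZMod.unitOfCoprime i' hcop with hu
  have hgq : (g : ℚ) ≠ 0 := by exact_mod_cast hg0.ne'
  have hnq : (n : ℚ) ≠ 0 := by exact_mod_cast hn.ne'
  have hn'q : (n' : ℚ) ≠ 0 := by exact_mod_cast hn'0.ne'
  rw [rowVals_iff hn'0]
  intro t
  set r := ((↑u⁻¹ : ZMod n') * ((t : ℕ) : ZMod n')).val with hr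
  have hrlt : r < n' := ZMod.val_lt _
  have key : ∀ j : Fin n, (Fourier n i j = cval n n' (t : ℕ)) ↔ ((j : ℕ) % n' = r) := by
    intro j
    rw [fourierM_apply, cval, mul_right_inj' (sqrt_term_ne hn)]
    rw [ee_eq_ee_iff]
    have harg : ((i:ℕ) : ℚ) * ((j:ℕ) : ℚ) / n - ((t:ℕ) : ℚ) / n'
        = (((i' * (j:ℕ) : ℕ) : ℚ) - ((t:ℕ) : ℚ)) / n' := by
      have h1 : ((i:ℕ) : ℚ) = (i' : ℚ) * g := by exact_mod_cast hig.symm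
      have h2 : ((n:ℕ) : ℚ) = (n' : ℚ) * g := by exact_mod_cast hng.symm
      rw [h1, h2]
      push_cast
      field_simp
    rw [harg, dvd_iff_exists_int hn'0]
    have hcast : ((i' * (j:ℕ) : ℕ) : ZMod n') = (i' : ZMod n') * ((j:ℕ) : ZMod n') := by
      push_cast
      ring
    rw [hcast]
    have hucoe : ((u : (ZMod n')ˣ) : ZMod n') = (i' : ZMod n') := ZMod.coe_unitOfCoprime i' hcop
    constructor
    · intro h
      have : ((j:ℕ) : ZMod n') = ↑u⁻¹ * ((t:ℕ) : ZMod n') :=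
        (Units.eq_inv_mul_iff_mul_eq u).mpr (by rw [hucoe]; exact h)
      rw [hr, ← this, ZMod.val_natCast]
    · intro h
      have hjz : ((j:ℕ) : ZMod n') = ↑u⁻¹ * ((t : ℕ) : ZMod n') := by
        apply ZMod.val_injective
        rw [ZMod.val_natCast, h, hr]
      have := (Units.eq_inv_mul_iff_mul_eq u).mp hjz
      rw [hucoe] at this
      exact this
  have hfe : (Finset.univ.filter fun j : Fin n => Fourier n i j = cval n n' (t:ℕ))
      = Finset.univ.filter fun j : Fin n => (j : ℕ) % n' = r :=
    Finset.filter_congr fun j _ => by rw [key j]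
  rw [hfe]
  exact card_residue hn'0 ⟨g, hng.symm⟩ hrlt

lemma scalar_mul_sqrt (m1 m2 : ℕ) :
    ((1 / Real.sqrt m1 : ℝ) : ℂ) * ((1 / Real.sqrt m2 : ℝ) : ℂ)
      = ((1 / Real.sqrt (((m1 * m2 : ℕ)) : ℝ) : ℝ) : ℂ) := by
  rw [← Complex.ofReal_mul]
  congr 1
  rw [Nat.cast_mul, Real.sqrt_mul (by positivity), div_mul_div_comm, one_mul]

lemma cval_mul (m1 m2 d1 d2 t1 t2 : ℕ) :
    cval m1 d1 t1 * cval m2 d2 t2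
      = ((1 / Real.sqrt (((m1 * m2 : ℕ)) : ℝ) : ℝ) : ℂ) * ee ((t1 : ℚ) / d1 + (t2 : ℚ) / d2) := by
  rw [cval, cval, ee_add, ← scalar_mul_sqrt]
  ring

lemma kronVec_apply {m n : ℕ} (v : Fin m → ℂ) (w : Fin n → ℂ) (x : Fin m × Fin n) :
    kronVec v w (finProdFinEquiv x) = v x.1 * w x.2 := by
  simp [kronVec]

open Classical in
lemma card_filter_prod' {α β : Type*} [Fintype α] [Fintype β] (p : α × β → Prop) :
    (Finset.univ.filter p).card = ∑ a : α, (Finset.univ.filter fun b => p (a, b)).card := by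
  rw [← Fintype.card_subtype]
  rw [Fintype.card_congr (Equiv.subtypeProdEquivSigmaSubtype (fun a b => p (a, b)))]
  rw [Fintype.card_sigma]
  simp [Fintype.card_subtype]

open Classical in
lemma kron_card_transfer {m1 m2 : ℕ} (v : Fin m1 → ℂ) (w : Fin m2 → ℂ) (z : ℂ) :
    (Finset.univ.filter fun j : Fin (m1 * m2) => kronVec v w j = z).card
      = ∑ j1 : Fin m1, (Finset.univ.filter fun j2 => v j1 * w j2 = z).card := by
  rw [← card_filter_equiv (finProdFinEquiv : Fin m1 × Fin m2 ≃ Fin (m1 * m2))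
    (fun j => kronVec v w j = z)]
  have : (Finset.univ.filter fun x : Fin m1 × Fin m2 => kronVec v w (finProdFinEquiv x) = z)
      = Finset.univ.filter fun x : Fin m1 × Fin m2 => v x.1 * w x.2 = z :=
    Finset.filter_congr fun x _ => by rw [kronVec_apply]
  rw [this, card_filter_prod' (fun x : Fin m1 × Fin m2 => v x.1 * w x.2 = z)]

open Classical in
lemma rowVals_kron_left {m1 m2 d1 d2 : ℕ} (h1 : 0 < m1) (h2 : 0 < m2)
    (hd1 : 0 < d1) (hd2 : 0 < d2) (hm1 : d1 ∣ m1) (hm2 : d2 ∣ m2) (hdd : d1 ∣ d2)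
    {v : Fin m1 → ℂ} {w : Fin m2 → ℂ} (hv : RowVals m1 d1 v) (hw : RowVals m2 d2 w) :
    RowVals (m1 * m2) d2 (kronVec v w) := by
  have hd1q : (d1 : ℚ) ≠ 0 := by exact_mod_cast hd1.ne'
  have hd2q : (d2 : ℚ) ≠ 0 := by exact_mod_cast hd2.ne'
  obtain ⟨c, hcdef⟩ := hdd
  rw [rowVals_iff hd2]
  intro t
  rw [kron_card_transfer]
  have hinner : ∀ j1 : Fin m1,
      (Finset.univ.filter fun j2 => v j1 * w j2 = cval (m1 * m2) d2 (t : ℕ)).card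
        = m2 / d2 := by
    intro j1
    obtain ⟨t1, ht1⟩ := rowVals_complete h1 hd1 hm1 hv j1
    have hcne : c ≠ 0 := by rintro rfl; rw [mul_zero] at hcdef; omega
    have hcq : (c : ℚ) ≠ 0 := by exact_mod_cast hcne
    have hq : ∃ z : ℤ, ((t : ℚ) / d2 - (t1 : ℚ) / d1) * d2 = z := by
      refine ⟨(t : ℤ) - (t1 : ℤ) * c, ?_⟩
      have hd2c : (d2 : ℚ) = (d1 : ℚ) * c := by exact_mod_cast hcdef
      rw [hd2c]
      push_cast
      field_simp
    obtain ⟨t2, n, hres⟩ := exists_rat_res hd2 _ hq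
    have hc : cval m1 d1 (t1 : ℕ) * cval m2 d2 (t2 : ℕ) = cval (m1 * m2) d2 (t : ℕ) := by
      rw [cval_mul, cval]
      congr 1
      rw [ee_eq_ee_iff]
      exact ⟨n, by linarith [hres]⟩
    have hfc : (Finset.univ.filter fun j2 => v j1 * w j2 = cval (m1 * m2) d2 (t : ℕ))
        = Finset.univ.filter fun j2 => w j2 = cval m2 d2 (t2 : ℕ) := by
      refine Finset.filter_congr fun j2 _ => ?_
      rw [ht1, ← hc, mul_right_inj' (cval_ne_zero h1)]
    rw [hfc]
    exact (rowVals_iff hd2 w).mp hw t2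
  simp only [hinner]
  rw [Finset.sum_const, Finset.card_univ, Fintype.card_fin, smul_eq_mul]
  exact (Nat.mul_div_assoc m1 hm2).symm

open Classical in
lemma rowVals_kron_right {m1 m2 d1 d2 : ℕ} (h1 : 0 < m1) (h2 : 0 < m2)
    (hd1 : 0 < d1) (hd2 : 0 < d2) (hm1 : d1 ∣ m1) (hm2 : d2 ∣ m2) (hdd : d2 ∣ d1)
    {v : Fin m1 → ℂ} {w : Fin m2 → ℂ} (hv : RowVals m1 d1 v) (hw : RowVals m2 d2 w) :
    RowVals (m1 * m2) d1 (kronVec v w) := by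
  have hd1q : (d1 : ℚ) ≠ 0 := by exact_mod_cast hd1.ne'
  have hd2q : (d2 : ℚ) ≠ 0 := by exact_mod_cast hd2.ne'
  obtain ⟨c, hcdef⟩ := hdd    -- d1 = d2 * c
  have hcne : c ≠ 0 := by rintro rfl; rw [mul_zero] at hcdef; omega
  have hc0 : 0 < c := Nat.pos_of_ne_zero hcne
  have hcq : (c : ℚ) ≠ 0 := by exact_mod_cast hcne
  have hd1c : (d1 : ℚ) = (d2 : ℚ) * c := by exact_mod_cast hcdef
  rw [rowVals_iff hd1]
  intro t
  rw [kron_card_transfer]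
  choose T hT using rowVals_complete h1 hd1 hm1 hv
  have hinner : ∀ j1 : Fin m1,
      (Finset.univ.filter fun j2 => v j1 * w j2 = cval (m1 * m2) d1 (t : ℕ)).card
        = if ((T j1 : ℕ)) % c = (t : ℕ) % c then m2 / d2 else 0 := by
    intro j1
    by_cases hcase : ((T j1 : ℕ)) % c = (t : ℕ) % c
    · rw [if_pos hcase]
      obtain ⟨k, hk⟩ := (Nat.modEq_iff_dvd).mp hcase
      have hq : ∃ z : ℤ, ((t : ℚ) / d1 - (T j1 : ℚ) / d1) * d2 = z := by
        refine ⟨k, ?_⟩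
        have hkq : ((t : ℕ) : ℚ) - ((T j1 : ℕ) : ℚ) = (c : ℚ) * k := by exact_mod_cast hk
        rw [div_sub_div_same, hd1c]
        rw [hkq]
        field_simp
      obtain ⟨t2, n, hres⟩ := exists_rat_res hd2 _ hq
      have hc : cval m1 d1 ((T j1) : ℕ) * cval m2 d2 (t2 : ℕ) = cval (m1 * m2) d1 (t : ℕ) := by
        rw [cval_mul, cval]
        congr 1
        rw [ee_eq_ee_iff]
        exact ⟨n, by linarith [hres]⟩
      have hfc : (Finset.univ.filter fun j2 => v j1 * w j2 = cval (m1 * m2) d1 (t : ℕ))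
          = Finset.univ.filter fun j2 => w j2 = cval m2 d2 (t2 : ℕ) := by
        refine Finset.filter_congr fun j2 _ => ?_
        rw [hT j1, ← hc, mul_right_inj' (cval_ne_zero h1)]
      rw [hfc]
      exact (rowVals_iff hd2 w).mp hw t2
    · rw [if_neg hcase]
      have hvne : v j1 ≠ 0 := by rw [hT j1]; exact cval_ne_zero h1
      have hfc : (Finset.univ.filter fun j2 => v j1 * w j2 = cval (m1 * m2) d1 (t : ℕ))
          = Finset.univ.filter fun j2 => w j2 = (v j1)⁻¹ * cval (m1 * m2) d1 (t : ℕ) := by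
        refine Finset.filter_congr fun j2 _ => ?_
        rw [eq_inv_mul_iff_mul_eq₀ hvne]
      rw [hfc]
      apply count_zero_of_not_val h2 hd2 hm2 hw
      intro t2 heq
      apply hcase
      have hmul : v j1 * cval m2 d2 (t2 : ℕ) = cval (m1 * m2) d1 (t : ℕ) := by
        rw [← heq, mul_inv_cancel_left₀ hvne]
      rw [hT j1, cval_mul] at hmul
      have hee : ee ((T j1 : ℚ) / d1 + (t2 : ℚ) / d2) = ee ((t : ℚ) / d1) :=
        mul_left_cancel₀ (sqrt_term_ne (Nat.mul_pos h1 h2)) (by rw [hmul, cval])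
      obtain ⟨n, hn⟩ := ee_eq_ee_iff.mp hee
      -- T + t2 * c - t = n * d1  (in ℚ after clearing denominators)
      have e1 : ((t2 : ℕ) : ℚ) / d2 * d1 = ((t2 : ℕ) : ℚ) * c := by
        rw [hd1c]
        field_simp
      have e2 : ∀ x : ℚ, x / (d1 : ℚ) * d1 = x := fun x => div_mul_cancel₀ x hd1q
      have hz : ((T j1 : ℕ) : ℚ) + (t2 : ℕ) * c - (t : ℕ) = n * d1 := by
        have h0 := congrArg (fun y : ℚ => y * d1) hn
        simp only [sub_mul, add_mul] at h0
        rw [e2, e2, e1] at h0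
        exact h0
      have hz' : ((T j1 : ℕ) : ℤ) + (t2 : ℕ) * c - (t : ℕ) = n * d1 := by exact_mod_cast hz
      have hdvd : (c : ℤ) ∣ ((t : ℕ) : ℤ) - ((T j1 : ℕ) : ℤ) := by
        refine ⟨(t2 : ℕ) - n * d2, ?_⟩
        have : (d1 : ℤ) = (d2 : ℤ) * c := by exact_mod_cast hcdef
        rw [this] at hz'
        push_cast
        linarith [hz']
      exact (Nat.modEq_iff_dvd).mpr hdvd
  simp only [hinner]
  -- now evaluate the sum
  rw [← Finset.sum_filter (fun j1 : Fin m1 => ((T j1 : ℕ)) % c = (t : ℕ) % c)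
    (fun _ => m2 / d2)]
  rw [Finset.sum_const, smul_eq_mul]
  -- count the j1's
  have hcount : (Finset.univ.filter fun j1 : Fin m1 => ((T j1 : ℕ)) % c = (t : ℕ) % c).card
      = d2 * (m1 / d1) := by
    have hstep := Finset.card_eq_sum_card_fiberwise
      (f := T) (s := Finset.univ.filter fun j1 : Fin m1 => ((T j1 : ℕ)) % c = (t : ℕ) % c)
      (t := Finset.univ.filter fun s : Fin d1 => ((s : ℕ)) % c = (t : ℕ) % c)
      (fun x hx => by
        rw [Finset.mem_coe, Finset.mem_filter] at hx ⊢
        exact ⟨Finset.mem_univ _, hx.2⟩)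
    rw [hstep]
    have hfib : ∀ s ∈ Finset.univ.filter fun s : Fin d1 => ((s : ℕ)) % c = (t : ℕ) % c,
        (Finset.filter (fun j1 => T j1 = s)
          (Finset.univ.filter fun j1 : Fin m1 => ((T j1 : ℕ)) % c = (t : ℕ) % c)).card
        = m1 / d1 := by
      intro s hs
      rw [Finset.mem_filter] at hs
      have : (Finset.filter (fun j1 => T j1 = s)
          (Finset.univ.filter fun j1 : Fin m1 => ((T j1 : ℕ)) % c = (t : ℕ) % c))
          = Finset.univ.filter fun j1 : Fin m1 => v j1 = cval m1 d1 (s : ℕ) := by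
        ext j1
        simp only [Finset.mem_filter, Finset.mem_univ, true_and]
        constructor
        · rintro ⟨-, h⟩
          rw [← h]
          exact hT j1
        · intro h
          have hts : T j1 = s :=
            Fin.ext (cval_inj h1 (T j1).isLt s.isLt (by rw [← hT j1, h]))
          exact ⟨by rw [hts]; exact hs.2, hts⟩
      rw [this]
      exact (rowVals_iff hd1 v).mp hv s
    rw [Finset.sum_congr rfl hfib, Finset.sum_const, smul_eq_mul]
    congr 1
    have := card_residue (n := d1) (c := c) (r := (t : ℕ) % c) hc0 ⟨d2, by rw [hcdef]; ring⟩
      (Nat.mod_lt _ hc0)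
    rw [this, hcdef, Nat.mul_div_cancel _ hc0]
  rw [hcount]
  -- arithmetic: d2 * (m1 / d1) * (m2 / d2) = m1 * m2 / d1
  obtain ⟨e1, he1⟩ := hm1
  obtain ⟨e2, he2⟩ := hm2
  subst he1 he2
  rw [Nat.mul_div_cancel_left e1 hd1, Nat.mul_div_cancel_left e2 hd2]
  rw [show d1 * e1 * (d2 * e2) = (d2 * e1 * e2) * d1 from by ring]
  rw [Nat.mul_div_cancel _ hd1]

open Classical in
lemma rowVals_comp_equiv {N n : ℕ} (v : Fin N → ℂ) (τ : Equiv.Perm (Fin N)) :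
    RowVals N n (fun j => v (τ j)) ↔ RowVals N n v := by
  unfold RowVals
  refine forall_congr' fun t => ?_
  rw [card_filter_equiv τ (fun j => v j = _)]

open Classical in
lemma countRows_conj {N n : ℕ} (M : Matrix (Fin N) (Fin N) ℂ)
    (σ τ : Equiv.Perm (Fin N)) :
    countRows N n (Matrix.of fun i j => M (σ i) (τ j)) = countRows N n M := by
  unfold countRows
  have h1 : (Finset.univ.filter fun i : Fin N =>
      RowVals N n ((Matrix.of fun i j => M (σ i) (τ j)) i))
      = Finset.univ.filter fun i : Fin N => RowVals N n (M (σ i)) := by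
    refine Finset.filter_congr fun i _ => ?_
    show RowVals N n (fun j => M (σ i) (τ j)) ↔ RowVals N n (M (σ i))
    exact rowVals_comp_equiv _ τ
  rw [h1]
  exact card_filter_equiv σ (fun i => RowVals N n (M i))

lemma perm_mul_eq {N : ℕ} (P Q M : Matrix (Fin N) (Fin N) ℂ)
    (hP : IsPermMatrix P) (hQ : IsPermMatrix Q) :
    ∃ σ τ : Equiv.Perm (Fin N), P * M * Q = Matrix.of fun i j => M (σ i) (τ j) := by
  obtain ⟨σP, hσ⟩ := hP
  obtain ⟨τQ, hτ⟩ := hQ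
  refine ⟨σP.symm, τQ, ?_⟩
  ext i j
  rw [Matrix.of_apply, Matrix.mul_apply]
  have hPM : ∀ l, (P * M) i l = M (σP.symm i) l := by
    intro l
    rw [Matrix.mul_apply]
    have : ∀ k, P i k * M k l = if k = σP.symm i then M k l else 0 := by
      intro k
      rw [hσ]
      by_cases h : σP k = i
      · rw [if_pos h, if_pos (by rw [← h, Equiv.symm_apply_apply]), one_mul]
      · rw [if_neg h, if_neg (fun hh => h (by rw [hh, Equiv.apply_symm_apply])), zero_mul]
    rw [Finset.sum_congr rfl fun k _ => this k, Finset.sum_ite_eq' Finset.univ (σP.symm i)]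
    rw [if_pos (Finset.mem_univ _)]
  have : ∀ l, (P * M) i l * Q l j = if l = τQ j then M (σP.symm i) l else 0 := by
    intro l
    rw [hPM l, hτ]
    by_cases h : τQ j = l
    · rw [if_pos h, if_pos h.symm, mul_one]
    · rw [if_neg h, if_neg (fun hh => h hh.symm), mul_zero]
  rw [Finset.sum_congr rfl fun l _ => this l, Finset.sum_ite_eq' Finset.univ (τQ j)]
  rw [if_pos (Finset.mem_univ _)]

open Classical in
lemma countRows_reindex {N N' n : ℕ} (h : N' = N) (eR : Fin N' ≃ Fin N)
    (M : Matrix (Fin N') (Fin N') ℂ) :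
    countRows N n (Matrix.reindex eR eR M) = countRows N' n M := by
  subst h
  have : Matrix.reindex eR eR M = Matrix.of fun i j => M (eR.symm i) (eR.symm j) := rfl
  rw [this]
  exact countRows_conj M eR.symm eR.symm

lemma prod_map_pow_sum (a : ℕ) (l : List ℕ) (h : ℕ → ℕ) :
    (l.map fun k => a ^ h k).prod = a ^ (l.map h).sum := by
  induction l with
  | nil => simp
  | cons k tl ih => simp [ih, pow_add]

lemma Lprod_pos {a : ℕ} (ha : 0 < a) (l : List ℕ) : 0 < (l.map (a ^ ·)).prod := by
  apply List.prod_pos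
  intro x hx
  obtain ⟨k, -, rfl⟩ := List.mem_map.mp hx
  exact pow_pos ha k

open Classical in
lemma ord_exists (a : ℕ) (ha : a.Prime) (ks : List ℕ) :
    ∃ f : Fin ((ks.map (a ^ ·)).prod) → ℕ,
      (∀ i, a ^ f i ∣ (ks.map (a ^ ·)).prod) ∧
      (∀ i, RowVals ((ks.map (a ^ ·)).prod) (a ^ f i) (kronFourier (ks.map (a ^ ·)) i)) ∧
      (∀ m, (Finset.univ.filter fun i => f i ≤ m).card
        = (ks.map fun k => a ^ min m k).prod) := by
  induction ks with
  | nil =>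
      refine ⟨fun _ => 0, fun i => by simp, ?_, fun m => by simp⟩
      intro i
      show RowVals 1 1 (kronFourier [] i)
      intro t
      have ht0 : (t : ℕ) = 0 := by omega
      have hone : ∀ j : Fin 1, kronFourier [] i j = 1 := by
        intro j
        show (1 : Matrix (Fin 1) (Fin 1) ℂ) i j = 1
        rw [Subsingleton.elim j i]; exact Matrix.one_apply_eq _
      have hval : ∀ j : Fin 1, kronFourier [] i j =
          ((1 / Real.sqrt (1:ℕ) : ℝ) : ℂ) *
            Complex.exp (2 * Real.pi * Complex.I * ((t:ℕ) : ℂ) / ((1:ℕ) : ℂ)) := by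
        intro j
        rw [hone j, ht0]
        simp
      rw [Finset.filter_true_of_mem fun j _ => hval j]
      simp
  | cons k tl ih =>
      obtain ⟨f', hf1, hf2, hf3⟩ := ih
      have hn1 : 0 < a ^ k := pow_pos ha.pos k
      have hN' : 0 < (tl.map (a ^ ·)).prod := Lprod_pos ha.pos tl
      have hxall : ∀ i1 : Fin (a ^ k), ∃ xx, xx ≤ k ∧
          a ^ k / Nat.gcd (a ^ k) (i1 : ℕ) = a ^ xx := by
        intro i1
        have hdv : a ^ k / Nat.gcd (a ^ k) (i1 : ℕ) ∣ a ^ k :=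
          Nat.div_dvd_of_dvd (Nat.gcd_dvd_left _ _)
        obtain ⟨xx, hx, hxe⟩ := (Nat.dvd_prime_pow ha).mp hdv
        exact ⟨xx, hx, hxe⟩
      choose x hxk hxe using hxall
      refine ⟨fun i => max (x (finProdFinEquiv.symm i).1) (f' (finProdFinEquiv.symm i).2),
        ?_, ?_, ?_⟩
      · intro i
        show a ^ max (x (finProdFinEquiv.symm i).1) (f' (finProdFinEquiv.symm i).2)
          ∣ a ^ k * (tl.map (a ^ ·)).prod
        rcases le_total (x (finProdFinEquiv.symm i).1) (f' (finProdFinEquiv.symm i).2)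
          with h | h
        · rw [max_eq_right h]
          exact Dvd.dvd.mul_left (hf1 _) _
        · rw [max_eq_left h]
          exact Dvd.dvd.mul_right (pow_dvd_pow a (hxk _)) _
      · intro i
        set i1 := (finProdFinEquiv.symm i).1
        set i2 := (finProdFinEquiv.symm i).2
        have hrow : kronFourier ((k :: tl).map (a ^ ·)) i
            = kronVec (Fourier (a ^ k) i1) (kronFourier (tl.map (a ^ ·)) i2) := rfl
        have hv : RowVals (a ^ k) (a ^ x i1) (Fourier (a ^ k) i1) :=
          (hxe i1) ▸ fourier_row hn1 i1
        have hw := hf2 i2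
        have hd1 : 0 < a ^ x i1 := pow_pos ha.pos _
        have hd2 : 0 < a ^ f' i2 := pow_pos ha.pos _
        have hm1 : a ^ x i1 ∣ a ^ k := pow_dvd_pow a (hxk i1)
        have hm2 : a ^ f' i2 ∣ (tl.map (a ^ ·)).prod := hf1 i2
        show RowVals (a ^ k * (tl.map (a ^ ·)).prod) (a ^ max (x i1) (f' i2))
          (kronFourier ((k :: tl).map (a ^ ·)) i)
        rw [hrow]
        rcases le_total (x i1) (f' i2) with h | h
        · rw [max_eq_right h]
          exact rowVals_kron_left hn1 hN' hd1 hd2 hm1 hm2 (pow_dvd_pow a h) hv hw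
        · rw [max_eq_left h]
          exact rowVals_kron_right hn1 hN' hd1 hd2 hm1 hm2 (pow_dvd_pow a h) hv hw
      · intro m
        have htrans := card_filter_equiv
          (finProdFinEquiv : Fin (a ^ k) × Fin ((tl.map (a ^ ·)).prod) ≃ _)
          (fun i => max (x (finProdFinEquiv.symm i).1) (f' (finProdFinEquiv.symm i).2) ≤ m)
        have hrest : (Finset.univ.filter
            fun pr : Fin (a ^ k) × Fin ((tl.map (a ^ ·)).prod) =>
              max (x (finProdFinEquiv.symm (finProdFinEquiv pr)).1)
                (f' (finProdFinEquiv.symm (finProdFinEquiv pr)).2) ≤ m).card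
            = ((k :: tl).map fun k' => a ^ min m k').prod := by
          have hsimp : (Finset.univ.filter
              fun pr : Fin (a ^ k) × Fin ((tl.map (a ^ ·)).prod) =>
                max (x (finProdFinEquiv.symm (finProdFinEquiv pr)).1)
                  (f' (finProdFinEquiv.symm (finProdFinEquiv pr)).2) ≤ m)
              = Finset.univ.filter
                fun pr : Fin (a ^ k) × Fin ((tl.map (a ^ ·)).prod) =>
                  (fun i1 => x i1 ≤ m) pr.1 ∧ (fun i2 => f' i2 ≤ m) pr.2 := by
            refine Finset.filter_congr fun pr _ => ?_
            rw [Equiv.symm_apply_apply]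
            exact max_le_iff
          rw [hsimp, ← Finset.univ_product_univ,
            Finset.filter_product (fun i1 : Fin (a ^ k) => x i1 ≤ m)
              (fun i2 : Fin ((tl.map (a ^ ·)).prod) => f' i2 ≤ m),
            Finset.card_product]
          have hfirst : (Finset.univ.filter fun i1 : Fin (a ^ k) => x i1 ≤ m).card
              = a ^ min m k := by
            have hcond : ∀ i1 : Fin (a ^ k),
                (x i1 ≤ m ↔ (i1 : ℕ) % a ^ (k - min m k) = 0) := by
              intro i1
              have hgcd : Nat.gcd (a ^ k) (i1 : ℕ) = a ^ (k - x i1) := by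
                have h1 : Nat.gcd (a ^ k) (i1 : ℕ) * (a ^ k / Nat.gcd (a ^ k) (i1 : ℕ))
                    = a ^ k := Nat.mul_div_cancel' (Nat.gcd_dvd_left _ _)
                rw [hxe i1] at h1
                have h2 : a ^ (k - x i1) * a ^ x i1 = a ^ k := by
                  rw [← pow_add]
                  congr 1
                  have := hxk i1
                  omega
                exact Nat.eq_of_mul_eq_mul_right (pow_pos ha.pos _) (by rw [h1, h2])
              constructor
              · intro h
                have hdvd : a ^ (k - min m k) ∣ a ^ (k - x i1) :=
                  pow_dvd_pow a (by have := hxk i1; omega)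
                have : a ^ (k - min m k) ∣ (i1 : ℕ) :=
                  dvd_trans (hgcd ▸ hdvd) (Nat.gcd_dvd_right _ _)
                exact Nat.dvd_iff_mod_eq_zero.mp this
              · intro h
                have hdvd1 : a ^ (k - min m k) ∣ (i1 : ℕ) :=
                  Nat.dvd_iff_mod_eq_zero.mpr h
                have hdvd2 : a ^ (k - min m k) ∣ a ^ k := pow_dvd_pow a (by omega)
                have hdvd3 : a ^ (k - min m k) ∣ a ^ (k - x i1) :=
                  hgcd ▸ Nat.dvd_gcd hdvd2 hdvd1
                have h5 := (Nat.pow_dvd_pow_iff_le_right ha.one_lt).mp hdvd3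
                have := hxk i1
                omega
            rw [Finset.filter_congr fun i1 _ => by rw [hcond i1]]
            rw [card_residue (pow_pos ha.pos _) (pow_dvd_pow a (by omega))
              (pow_pos ha.pos _)]
            rw [Nat.pow_div (by omega) ha.pos]
            congr 1
            omega
          rw [hfirst, hf3 m]
          rfl
        exact htrans.symm.trans hrest

open Classical in
lemma sum_countRows (a : ℕ) (ha : a.Prime) (ks : List ℕ) (m : ℕ)
    (hm : a ^ m ∣ (ks.map (a ^ ·)).prod) :
    ∑ m' ∈ Finset.range (m + 1),
        countRows ((ks.map (a ^ ·)).prod) (a ^ m') (kronFourier (ks.map (a ^ ·)))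
      = (ks.map fun k => a ^ min m k).prod := by
  obtain ⟨f, hf1, hf2, hf3⟩ := ord_exists a ha ks
  have hNpos : 0 < (ks.map (a ^ ·)).prod := Lprod_pos ha.pos ks
  have hstep : ∀ m' ≤ m, countRows ((ks.map (a ^ ·)).prod) (a ^ m') (kronFourier (ks.map (a ^ ·)))
      = (Finset.univ.filter fun i => f i = m').card := by
    intro m' hm'
    unfold countRows
    refine congrArg Finset.card (Finset.filter_congr fun i _ => ?_)
    constructor
    · intro hRV
      by_contra hne
      rcases le_total m' (f i) with hle | hle
      · exact rowVals_order_unique hNpos (pow_pos ha.pos _) (pow_dvd_pow a hle)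
          (fun hh => hne (Nat.pow_right_injective ha.two_le hh).symm)
          (hf1 i) hRV (hf2 i)
      · exact rowVals_order_unique hNpos (pow_pos ha.pos _) (pow_dvd_pow a hle)
          (fun hh => hne (Nat.pow_right_injective ha.two_le hh))
          (dvd_trans (pow_dvd_pow a hm') hm) (hf2 i) hRV
    · intro h
      rw [← h]
      exact hf2 i
  have hsum : ∑ m' ∈ Finset.range (m + 1),
      (Finset.univ.filter fun i => f i = m').card
      = (Finset.univ.filter fun i => f i ≤ m).card := by
    have hfib := Finset.card_eq_sum_card_fiberwise (f := f)
      (s := Finset.univ.filter fun i => f i ≤ m) (t := Finset.range (m + 1))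
      (fun x hx => by
        rw [Finset.mem_coe, Finset.mem_filter] at hx
        rw [Finset.mem_coe, Finset.mem_range]
        omega)
    rw [hfib]
    refine (Finset.sum_congr rfl fun b hb => ?_).symm
    rw [Finset.mem_range] at hb
    refine congrArg Finset.card ?_
    ext i
    simp only [Finset.mem_filter, Finset.mem_univ, true_and]
    constructor
    · rintro ⟨h1, h2⟩
      exact h2
    · intro h
      exact ⟨by omega, h⟩
  rw [Finset.sum_congr rfl fun m' hm' => hstep m' (by
    rw [Finset.mem_range] at hm'; omega), hsum, hf3 m]

lemma map_min_sum_length {l : List ℕ} (hl : ∀ x ∈ l, 1 ≤ x) :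
    (l.map fun x => min 1 x).sum = l.length := by
  induction l with
  | nil => simp
  | cons k tl ih =>
      simp only [List.map_cons, List.sum_cons, List.length_cons]
      rw [ih fun x hx => hl x (List.mem_cons_of_mem _ hx),
        min_eq_left (hl k List.mem_cons_self)]
      omega

lemma comb_head_le {k l : ℕ} {t u : List ℕ}
    (hu : ∀ x ∈ u, x ≤ l)
    (h : ∀ m, ((k :: t).map fun x => min m x).sum = ((l :: u).map fun x => min m x).sum) :
    k ≤ l := by
  by_contra hlt
  push_neg at hlt
  have humap : ∀ m, l ≤ m → ((l :: u).map fun x => min m x).sum = (l :: u).sum := by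
    intro m hlm
    simp only [List.map_cons, List.sum_cons, min_eq_right hlm]
    congr 1
    rw [List.map_congr_left fun x hx => min_eq_right ((hu x hx).trans hlm)]
    simp
  have h1 := h l
  have h2 := h k
  rw [humap l le_rfl] at h1
  rw [humap k hlt.le] at h2
  simp only [List.map_cons, List.sum_cons, min_self, min_eq_left hlt.le] at h1 h2
  have hmono : ((t.map fun x => min l x).sum) ≤ ((t.map fun x => min k x).sum) :=
    List.sum_le_sum fun x hx => min_le_min hlt.le le_rfl
  omega

lemma comb (ks : List ℕ) : ∀ ls : List ℕ, (∀ x ∈ ks, 1 ≤ x) → (∀ x ∈ ls, 1 ≤ x) →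
    ks.Pairwise (· ≥ ·) → ls.Pairwise (· ≥ ·) →
    (∀ m, (ks.map fun x => min m x).sum = (ls.map fun x => min m x).sum) → ks = ls := by
  induction ks with
  | nil =>
      intro ls _ hl _ _ h
      have h1 := h 1
      rw [map_min_sum_length hl] at h1
      simp at h1
      exact (List.length_eq_zero_iff.mp h1.symm).symm
  | cons k t ih =>
      intro ls hk hl hks hls h
      cases ls with
      | nil =>
          have h1 := h 1
          rw [map_min_sum_length hk] at h1
          simp at h1
      | cons l u =>
          obtain ⟨hkt, hts⟩ := List.pairwise_cons.mp hks
          obtain ⟨hlu, hus⟩ := List.pairwise_cons.mp hls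
          have hkl : k = l := le_antisymm
            (comb_head_le (fun x hx => hlu x hx) h)
            (comb_head_le (fun x hx => hkt x hx) fun m => (h m).symm)
          subst hkl
          have htail : ∀ m, (t.map fun x => min m x).sum = (u.map fun x => min m x).sum := by
            intro m
            have := h m
            simp only [List.map_cons, List.sum_cons] at this
            omega
          rw [ih u (fun x hx => hk x (List.mem_cons_of_mem _ hx))
            (fun x hx => hl x (List.mem_cons_of_mem _ hx)) hts hus htail]


/-- two pure ordered FFKPs are permutation equivalent iff they are
identical. -/
theorem stmt14 (a : ℕ) (ha : a.Prime) (ks ls : List ℕ)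
    (hk : ∀ k ∈ ks, 1 ≤ k) (hl : ∀ k ∈ ls, 1 ≤ k)
    (hks : ks.Pairwise (· ≥ ·)) (hls : ls.Pairwise (· ≥ ·))
    (hsize : (ks.map (a ^ ·)).prod = (ls.map (a ^ ·)).prod) :
    (∃ P Q : Matrix (Fin ((ks.map (a ^ ·)).prod)) (Fin ((ks.map (a ^ ·)).prod)) ℂ,
      IsPermMatrix P ∧ IsPermMatrix Q ∧
      Matrix.reindex (finCongr hsize.symm) (finCongr hsize.symm)
          (kronFourier (ls.map (a ^ ·)))
        = P * kronFourier (ks.map (a ^ ·)) * Q) ↔ ks = ls := by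
  constructor
  · rintro ⟨P, Q, hP, hQ, heq⟩
    have hcount : ∀ n : ℕ,
        countRows ((ks.map (a ^ ·)).prod) n (kronFourier (ks.map (a ^ ·)))
          = countRows ((ls.map (a ^ ·)).prod) n (kronFourier (ls.map (a ^ ·))) := by
      intro n
      obtain ⟨σ, τ, hPQ⟩ := perm_mul_eq P Q (kronFourier (ks.map (a ^ ·))) hP hQ
      calc countRows ((ks.map (a ^ ·)).prod) n (kronFourier (ks.map (a ^ ·)))
          = countRows ((ks.map (a ^ ·)).prod) n
            (Matrix.of fun i j => kronFourier (ks.map (a ^ ·)) (σ i) (τ j)) :=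
            (countRows_conj _ σ τ).symm
        _ = countRows ((ks.map (a ^ ·)).prod) n
            (P * kronFourier (ks.map (a ^ ·)) * Q) := by rw [hPQ]
        _ = countRows ((ks.map (a ^ ·)).prod) n
            (Matrix.reindex (finCongr hsize.symm) (finCongr hsize.symm)
              (kronFourier (ls.map (a ^ ·)))) := by rw [heq]
        _ = countRows ((ls.map (a ^ ·)).prod) n (kronFourier (ls.map (a ^ ·))) :=
            countRows_reindex hsize.symm _ _
    have hSk : (ks.map (a ^ ·)).prod = a ^ ks.sum := by
      have := prod_map_pow_sum a ks id
      simpa using this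
    have hSl : (ls.map (a ^ ·)).prod = a ^ ls.sum := by
      have := prod_map_pow_sum a ls id
      simpa using this
    have hs : ks.sum = ls.sum :=
      Nat.pow_right_injective ha.two_le (by show a ^ ks.sum = a ^ ls.sum; rw [← hSk, ← hSl]; exact hsize)
    have hmin : ∀ m, (ks.map fun x => min m x).sum = (ls.map fun x => min m x).sum := by
      intro m
      rcases le_or_gt m ks.sum with hm | hm
      · have h1 := sum_countRows a ha ks m (by rw [hSk]; exact pow_dvd_pow a hm)
        have h2 := sum_countRows a ha ls m
          (by rw [hSl, ← hs]; exact pow_dvd_pow a hm)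
        have h12 : (ks.map fun k => a ^ min m k).prod
            = (ls.map fun k => a ^ min m k).prod := by
          rw [← h1, ← h2]
          exact Finset.sum_congr rfl fun n _ => hcount (a ^ n)
        refine Nat.pow_right_injective ha.two_le ?_
        show a ^ (ks.map fun x => min m x).sum = a ^ (ls.map fun x => min m x).sum
        rw [← prod_map_pow_sum a ks (fun x => min m x),
          ← prod_map_pow_sum a ls (fun x => min m x)]
        exact h12
      · have hk' : (ks.map fun x => min m x) = ks := by
          rw [List.map_congr_left fun x hx => min_eq_right
            (le_of_lt (lt_of_le_of_lt
              (List.single_le_sum (fun _ _ => Nat.zero_le _) x hx) hm))]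
          exact List.map_id ks
        have hl' : (ls.map fun x => min m x) = ls := by
          rw [List.map_congr_left fun x hx => min_eq_right
            (le_of_lt (lt_of_le_of_lt
              (List.single_le_sum (fun _ _ => Nat.zero_le _) x hx) (hs ▸ hm)))]
          exact List.map_id ls
        rw [hk', hl']
        exact hs
    exact comb ks ls hk hl hks hls hmin
  · intro h
    subst h
    refine ⟨1, 1, ⟨Equiv.refl _, ?_⟩, ⟨Equiv.refl _, ?_⟩, ?_⟩
    · intro i j
      simp [Matrix.one_apply, eq_comm]
    · intro i j
      simp [Matrix.one_apply, eq_comm]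
    · rw [Matrix.one_mul, Matrix.mul_one]
      rfl
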